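/- Let A ∈ ℝ^{n×d} have full column rank with rows a_1,…,a_n, let α be an integer with 2 ≤ α ≤ n, and let S be a matrix such that (1/2)‖Ax‖₁ ≤ ‖SAx‖₁ ≤ (3/2)‖Ax‖₁ for all x ∈ ℝ^d. Fix i ∈ {1,…,n}. Let B ⊆ {1,…,n} be a uniformly random subset of size α among all size-α subsets containing i, let r^{(1)},…,r^{(100)} be i.i.d. uniform vectors in {−1,+1}^α independent of B, let A_B ∈ ℝ^{α×d} be the submatrix of A with rows indexed by B, and define σ̃ := max_{1≤k≤100} σ_1^{SA}(A_Bᵀ r^{(k)}). Then with probability at least 0.8, (2/3)·σ_1(a_i) ≤ σ̃ ≤ 2·σ_1(a_i) + 20·(α/n)·𝔖_1(A). -/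

import Mathlib

open Matrix BigOperators
open scoped Classical

/-- The ℓp sensitivity of a vector `a` with respect to a matrix `B`:
`σ_p^B(a) = sup { |⟨a,x⟩|^p / ‖Bx‖_p^p : x, Bx ≠ 0 }`. -/
noncomputable def sens (p : ℝ) {m d : ℕ} (B : Matrix (Fin m) (Fin d) ℝ)
    (a : Fin d → ℝ) : ℝ :=
  sSup {r : ℝ | ∃ x : Fin d → ℝ, B.mulVec x ≠ 0 ∧
    r = |a ⬝ᵥ x| ^ p / ∑ i, |B.mulVec x i| ^ p}

section Helpers

open Matrix

lemma sum_abs_pos_of_ne_zero {n : ℕ} {v : Fin n → ℝ} (hv : v ≠ 0) :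
    0 < ∑ j, |v j| := by
  obtain ⟨j, hj⟩ := Function.ne_iff.mp hv
  have : 0 < |v j| := abs_pos.mpr hj
  calc (0:ℝ) < |v j| := this
    _ ≤ ∑ j, |v j| :=
      Finset.single_le_sum (f := fun j => |v j|) (fun _ _ => abs_nonneg _) (Finset.mem_univ j)

lemma eq_zero_of_sum_abs_nonpos {n : ℕ} {v : Fin n → ℝ} (hv : ∑ j, |v j| ≤ 0) :
    v = 0 := by
  by_contra h
  exact absurd hv (not_le.mpr (sum_abs_pos_of_ne_zero h))

lemma func_bound {n d : ℕ} (A : Matrix (Fin n) (Fin d) ℝ)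
    (hA : LinearIndependent ℝ Aᵀ) (a : Fin d → ℝ) :
    ∃ C : ℝ, 0 ≤ C ∧ ∀ x : Fin d → ℝ, |a ⬝ᵥ x| ≤ C * ∑ j, |A.mulVec x j| := by
  have hinj : Function.Injective A.mulVecLin := by
    rw [Matrix.coe_mulVecLin]
    exact Matrix.mulVec_injective_iff.mpr hA
  obtain ⟨g, hg⟩ := (A.mulVecLin).exists_leftInverse_of_injective
    (LinearMap.ker_eq_bot.mpr hinj)
  set φ : (Fin d → ℝ) →ₗ[ℝ] ℝ :=
    { toFun := fun x => a ⬝ᵥ x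
      map_add' := by intro x y; simp [dotProduct_add]
      map_smul' := by intro c x; simp [dotProduct_smul] }
  set ψ := (φ.comp g).toContinuousLinearMap
  refine ⟨‖ψ‖, norm_nonneg _, fun x => ?_⟩
  have h1 : a ⬝ᵥ x = ψ (A.mulVec x) := by
    have := congrArg (fun f => φ (f x)) hg
    simp only [LinearMap.comp_apply, LinearMap.id_apply] at this ⊢
    simpa [ψ, φ] using this.symm
  rw [h1]
  calc |ψ (A.mulVec x)| ≤ ‖ψ‖ * ‖A.mulVec x‖ := ψ.le_opNorm _
    _ ≤ ‖ψ‖ * ∑ j, |A.mulVec x j| := by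
        refine mul_le_mul_of_nonneg_left ?_ (norm_nonneg _)
        refine (pi_norm_le_iff_of_nonneg (by positivity)).mpr fun j => ?_
        calc ‖A.mulVec x j‖ = |A.mulVec x j| := rfl
          _ ≤ ∑ j, |A.mulVec x j| :=
            Finset.single_le_sum (f := fun j => |A.mulVec x j|) (fun _ _ => abs_nonneg _)
              (Finset.mem_univ j)

lemma sens_one_set {m d : ℕ} (B : Matrix (Fin m) (Fin d) ℝ) (a : Fin d → ℝ) :
    sens 1 B a = sSup {r : ℝ | ∃ x : Fin d → ℝ, B.mulVec x ≠ 0 ∧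
      r = |a ⬝ᵥ x| / ∑ i, |B.mulVec x i|} := by
  unfold sens; norm_num [Real.rpow_one]

lemma sens_nonneg {m d : ℕ} (B : Matrix (Fin m) (Fin d) ℝ) (a : Fin d → ℝ) :
    0 ≤ sens 1 B a := by
  rw [sens_one_set]
  apply Real.sSup_nonneg
  rintro r ⟨x, hx, rfl⟩
  positivity

lemma sens_eq_zero_of_degenerate (p : ℝ) {m d : ℕ} {B : Matrix (Fin m) (Fin d) ℝ}
    (h : ∀ x : Fin d → ℝ, B.mulVec x = 0) (a : Fin d → ℝ) : sens p B a = 0 := by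
  unfold sens
  convert Real.sSup_empty using 2
  ext r
  simp [h]

lemma sens_le {m d : ℕ} {B : Matrix (Fin m) (Fin d) ℝ} {a : Fin d → ℝ} {C : ℝ}
    (hC : 0 ≤ C) (h : ∀ x : Fin d → ℝ, B.mulVec x ≠ 0 → |a ⬝ᵥ x| ≤ C * ∑ j, |B.mulVec x j|) :
    sens 1 B a ≤ C := by
  rw [sens_one_set]
  apply Real.sSup_le _ hC
  rintro r ⟨x, hx, rfl⟩
  rw [div_le_iff₀ (sum_abs_pos_of_ne_zero hx)]
  exact h x hx

lemma le_sens {m d : ℕ} {B : Matrix (Fin m) (Fin d) ℝ} {a : Fin d → ℝ} {C : ℝ}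
    (h : ∀ x : Fin d → ℝ, B.mulVec x ≠ 0 → |a ⬝ᵥ x| ≤ C * ∑ j, |B.mulVec x j|)
    {x₀ : Fin d → ℝ} (hx₀ : B.mulVec x₀ ≠ 0) :
    |a ⬝ᵥ x₀| / (∑ j, |B.mulVec x₀ j|) ≤ sens 1 B a := by
  rw [sens_one_set]
  apply le_csSup
  · refine ⟨C, ?_⟩
    rintro r ⟨x, hx, rfl⟩
    rw [div_le_iff₀ (sum_abs_pos_of_ne_zero hx)]
    exact h x hx
  · exact ⟨x₀, hx₀, rfl⟩

end Helpers

lemma sens_attained {n d : ℕ} {A : Matrix (Fin n) (Fin d) ℝ}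
    (hA : LinearIndependent ℝ Aᵀ) (a : Fin d → ℝ)
    {x₀ : Fin d → ℝ} (hx₀ : A.mulVec x₀ ≠ 0) :
    ∃ x : Fin d → ℝ, A.mulVec x ≠ 0 ∧
      sens 1 A a = |a ⬝ᵥ x| / ∑ j, |A.mulVec x j| := by
  have hinj : Function.Injective A.mulVec := Matrix.mulVec_injective_iff.mpr hA
  have hAne : ∀ x : Fin d → ℝ, x ≠ 0 → A.mulVec x ≠ 0 := by
    intro x hx h
    exact hx (hinj (h.trans (A.mulVec_zero).symm))
  set F : (Fin d → ℝ) → ℝ := fun x => |a ⬝ᵥ x| / ∑ j, |A.mulVec x j| with hF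
  -- continuity ingredients
  have hcnum : Continuous fun x : Fin d → ℝ => a ⬝ᵥ x := by
    unfold dotProduct
    exact continuous_finset_sum _ fun i _ => continuous_const.mul (continuous_apply i)
  have hcden : Continuous fun x : Fin d → ℝ => ∑ j, |A.mulVec x j| := by
    refine continuous_finset_sum _ fun j _ => ?_
    have : Continuous fun x : Fin d → ℝ => A.mulVec x j := by
      simp only [Matrix.mulVec, dotProduct]
      exact continuous_finset_sum _ fun i _ => continuous_const.mul (continuous_apply i)
    exact this.abs
  -- sphere compactness
  have hx₀ne : x₀ ≠ 0 := fun h => hx₀ (by simp [h])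
  have : Nontrivial (Fin d → ℝ) := nontrivial_of_ne x₀ 0 hx₀ne
  have hsne : (Metric.sphere (0 : Fin d → ℝ) 1).Nonempty :=
    NormedSpace.sphere_nonempty.mpr zero_le_one
  have hscomp : IsCompact (Metric.sphere (0 : Fin d → ℝ) 1) := isCompact_sphere _ _
  have hconF : ContinuousOn F (Metric.sphere (0 : Fin d → ℝ) 1) := by
    apply ContinuousOn.div hcnum.abs.continuousOn hcden.continuousOn
    intro x hx
    have hxne : x ≠ 0 := by
      intro h
      simp [h] at hx
    have : A.mulVec x ≠ 0 := hAne x hxne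
    obtain ⟨j, hj⟩ := Function.ne_iff.mp this
    have : (0:ℝ) < ∑ j, |A.mulVec x j| :=
      lt_of_lt_of_le (abs_pos.mpr hj)
        (Finset.single_le_sum (f := fun j => |A.mulVec x j|) (fun _ _ => abs_nonneg _)
          (Finset.mem_univ j))
    exact ne_of_gt this
  obtain ⟨x', hx'mem, hx'max⟩ := hscomp.exists_isMaxOn hsne hconF
  have hx'norm : ‖x'‖ = 1 := by simpa using hx'mem
  have hx'ne : x' ≠ 0 := by
    intro h; rw [h] at hx'norm; simp at hx'norm
  have hAx' : A.mulVec x' ≠ 0 := hAne x' hx'ne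
  -- scaling invariance
  have hscale : ∀ x : Fin d → ℝ, x ≠ 0 → F x = F (‖x‖⁻¹ • x) := by
    intro x hx
    have hn : (0:ℝ) < ‖x‖ := norm_pos_iff.mpr hx
    have h1 : a ⬝ᵥ (‖x‖⁻¹ • x) = ‖x‖⁻¹ * (a ⬝ᵥ x) := by
      simp [dotProduct_smul, smul_eq_mul]
    have h2 : ∀ j, A.mulVec (‖x‖⁻¹ • x) j = ‖x‖⁻¹ * A.mulVec x j := by
      intro j
      rw [Matrix.mulVec_smul]
      simp [smul_eq_mul]
    simp only [hF, h1, h2, abs_mul, ← Finset.mul_sum]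
    rw [abs_of_pos (inv_pos.mpr hn), mul_div_mul_left]
    exact ne_of_gt (inv_pos.mpr hn)
  refine ⟨x', hAx', ?_⟩
  rw [sens_one_set]
  apply le_antisymm
  · apply Real.sSup_le
    · rintro r ⟨x, hx, rfl⟩
      have hxne : x ≠ 0 := by
        intro h; apply hx; simp [h]
      have hmem : ‖x‖⁻¹ • x ∈ Metric.sphere (0 : Fin d → ℝ) 1 := by
        simp [norm_smul, abs_of_pos (inv_pos.mpr (norm_pos_iff.mpr hxne)),
          inv_mul_cancel₀ (ne_of_gt (norm_pos_iff.mpr hxne))]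
      calc |a ⬝ᵥ x| / ∑ j, |A.mulVec x j| = F x := rfl
        _ = F (‖x‖⁻¹ • x) := hscale x hxne
        _ ≤ F x' := hx'max hmem
    · positivity
  · apply le_csSup
    · refine ⟨F x', ?_⟩
      rintro r ⟨x, hx, rfl⟩
      have hxne : x ≠ 0 := by intro h; apply hx; simp [h]
      have hmem : ‖x‖⁻¹ • x ∈ Metric.sphere (0 : Fin d → ℝ) 1 := by
        simp [norm_smul, abs_of_pos (inv_pos.mpr (norm_pos_iff.mpr hxne)),
          inv_mul_cancel₀ (ne_of_gt (norm_pos_iff.mpr hxne))]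
      calc |a ⬝ᵥ x| / ∑ j, |A.mulVec x j| = F x := rfl
        _ = F (‖x‖⁻¹ • x) := hscale x hxne
        _ ≤ F x' := hx'max hmem
    · exact ⟨x', hAx', rfl⟩

lemma signflip_count {n : ℕ} (B : Finset (Fin n)) (i : Fin n) (hi : i ∈ B)
    (c : Fin n → ℝ) :
    2 * (Finset.univ.filter (fun ε : Fin n → Bool =>
      |∑ j ∈ B, (if ε j then (1:ℝ) else -1) * c j| < |c i|)).card ≤ 2 ^ n := by
  classical
  set s : (Fin n → Bool) → ℝ := fun ε => ∑ j ∈ B, (if ε j then (1:ℝ) else -1) * c j with hs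
  set badF := Finset.univ.filter (fun ε : Fin n → Bool => |s ε| < |c i|) with hbad
  set goodF := Finset.univ.filter (fun ε : Fin n → Bool => ¬ |s ε| < |c i|) with hgood
  have key : ∀ ε : Fin n → Bool, s (Function.update ε i (!ε i)) =
      s ε - 2 * (if ε i then (1:ℝ) else -1) * c i := by
    intro ε
    have h1 : s ε = (if ε i then (1:ℝ) else -1) * c i
        + ∑ j ∈ B.erase i, (if ε j then (1:ℝ) else -1) * c j := by
      rw [hs]; exact (Finset.add_sum_erase B _ hi).symm
    have h2 : s (Function.update ε i (!ε i)) = (if !ε i then (1:ℝ) else -1) * c i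
        + ∑ j ∈ B.erase i, (if ε j then (1:ℝ) else -1) * c j := by
      simp only [hs]
      rw [← Finset.add_sum_erase B _ hi]
      congr 1
      · simp [Function.update_self]
      · apply Finset.sum_congr rfl
        intro j hj
        rw [Function.update_of_ne (Finset.ne_of_mem_erase hj)]
    rw [h1, h2]
    cases h : ε i <;> simp <;> ring
  have hmaps : ∀ ε ∈ badF, Function.update ε i (!ε i) ∈ goodF := by
    intro ε hε
    rw [hbad, Finset.mem_filter] at hε
    rw [hgood, Finset.mem_filter]
    refine ⟨Finset.mem_univ _, ?_⟩
    intro hlt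
    rw [key] at hlt
    have habs : |2 * (if ε i then (1:ℝ) else -1) * c i| = 2 * |c i| := by
      cases h : ε i <;> simp [abs_mul] <;> ring_nf <;> simp [abs_mul]
    have h4 := abs_sub (s ε) (s ε - 2 * (if ε i then (1:ℝ) else -1) * c i)
    rw [sub_sub_cancel, habs] at h4
    have h5 := hε.2
    linarith
  have hinj : Set.InjOn (fun ε : Fin n → Bool => Function.update ε i (!ε i)) ↑badF := by
    intro ε₁ h₁ ε₂ h₂ heq
    funext j
    by_cases hj : j = i
    · subst hj
      have := congrFun heq j
      simp only [Function.update_self] at this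
      cases h1 : ε₁ j <;> cases h2 : ε₂ j <;> simp [h1, h2] at this ⊢
    · have := congrFun heq j
      simpa [Function.update_of_ne hj] using this
  have hle : badF.card ≤ goodF.card := Finset.card_le_card_of_injOn _ hmaps hinj
  have hsum : badF.card + goodF.card = 2 ^ n := by
    rw [hbad, hgood]
    rw [Finset.card_filter_add_card_filter_not]
    simp [Fintype.card_fun]
  omega

lemma pi_count {n : ℕ} (p : (Fin n → Bool) → Prop) [DecidablePred p] :
    (Finset.univ.filter (fun f : Fin 100 → Fin n → Bool => ∀ k, p (f k))).card
      = (Finset.univ.filter p).card ^ 100 := by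
  classical
  have : (Finset.univ.filter (fun f : Fin 100 → Fin n → Bool => ∀ k, p (f k)))
      = Fintype.piFinset (fun _ : Fin 100 => Finset.univ.filter p) := by
    ext f
    simp [Fintype.mem_piFinset]
  rw [this, Fintype.card_piFinset]
  simp

lemma card_blocks {n α : ℕ} (hα : 1 ≤ α) (i : Fin n) :
    Fintype.card {S : Finset (Fin n) // S.card = α ∧ i ∈ S} = (n-1).choose (α-1) := by
  classical
  rw [Fintype.card_subtype]
  rw [show (n-1).choose (α-1) = ((Finset.univ.erase i).powersetCard (α-1)).card by
    rw [Finset.card_powersetCard, Finset.card_erase_of_mem (Finset.mem_univ i),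
      Finset.card_univ, Fintype.card_fin]]
  refine Finset.card_bij' (fun S _ => S.erase i) (fun T _ => insert i T) ?_ ?_ ?_ ?_
  · intro S hS
    rw [Finset.mem_filter] at hS
    rw [Finset.mem_powersetCard]
    exact ⟨Finset.erase_subset_erase i (Finset.subset_univ S),
      by rw [Finset.card_erase_of_mem hS.2.2, hS.2.1]⟩
  · intro T hT
    rw [Finset.mem_powersetCard] at hT
    have hiT : i ∉ T := fun h => (Finset.notMem_erase i _) (hT.1 h)
    rw [Finset.mem_filter]
    refine ⟨Finset.mem_univ _, ?_, Finset.mem_insert_self i T⟩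
    rw [Finset.card_insert_of_notMem hiT, hT.2]
    omega
  · intro S hS
    rw [Finset.mem_filter] at hS
    exact Finset.insert_erase hS.2.2
  · intro T hT
    rw [Finset.mem_powersetCard] at hT
    exact Finset.erase_insert (fun h => (Finset.notMem_erase i _) (hT.1 h))

lemma card_blocks_mem {n α : ℕ} (hα : 2 ≤ α) (i j : Fin n) (hij : j ≠ i) :
    (Finset.univ.filter
      (fun B : {S : Finset (Fin n) // S.card = α ∧ i ∈ S} => j ∈ B.1)).card
      = (n-2).choose (α-2) := by
  classical
  rw [show (n-2).choose (α-2) = (((Finset.univ.erase i).erase j).powersetCard (α-2)).card by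
    rw [Finset.card_powersetCard, Finset.card_erase_of_mem
      (Finset.mem_erase.mpr ⟨hij, Finset.mem_univ j⟩),
      Finset.card_erase_of_mem (Finset.mem_univ i), Finset.card_univ, Fintype.card_fin,
      show n - 1 - 1 = n - 2 from by omega]]
  refine Finset.card_bij' (fun B _ => (B.1.erase i).erase j)
    (fun T hT => (⟨insert i (insert j T), by
      rw [Finset.mem_powersetCard] at hT
      have hjT : j ∉ T := fun h => (Finset.notMem_erase j _) (hT.1 h)
      have hiT : i ∉ insert j T := by
        intro h
        rcases Finset.mem_insert.mp h with h | h
        · exact hij h.symm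
        · exact (Finset.notMem_erase i _) (Finset.mem_of_mem_erase (hT.1 h))
      constructor
      · rw [Finset.card_insert_of_notMem hiT, Finset.card_insert_of_notMem hjT, hT.2]
        omega
      · exact Finset.mem_insert_self i _⟩ :
        {S : Finset (Fin n) // S.card = α ∧ i ∈ S})) ?_ ?_ ?_ ?_
  · intro B hB
    rw [Finset.mem_filter] at hB
    rw [Finset.mem_powersetCard]
    constructor
    · exact Finset.erase_subset_erase j (Finset.erase_subset_erase i (Finset.subset_univ _))
    · rw [Finset.card_erase_of_mem (Finset.mem_erase.mpr ⟨hij, hB.2⟩),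
        Finset.card_erase_of_mem B.2.2, B.2.1]
      omega
  · intro T hT
    exact Finset.mem_filter.mpr ⟨Finset.mem_univ _,
      Finset.mem_insert_of_mem (Finset.mem_insert_self j T)⟩
  · intro B hB
    rw [Finset.mem_filter] at hB
    apply Subtype.ext
    have hjB : j ∈ B.1.erase i := Finset.mem_erase.mpr ⟨hij, hB.2⟩
    simp only
    rw [Finset.insert_erase hjB, Finset.insert_erase B.2.2]
  · intro T hT
    rw [Finset.mem_powersetCard] at hT
    have hjT : j ∉ T := fun h => (Finset.notMem_erase j _) (hT.1 h)
    have hiT : i ∉ insert j T := by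
      intro h
      rcases Finset.mem_insert.mp h with h | h
      · exact hij h.symm
      · exact (Finset.notMem_erase i _) (Finset.mem_of_mem_erase (hT.1 h))
    simp only
    rw [Finset.erase_insert hiT, Finset.erase_insert hjT]

set_option maxHeartbeats 1000000 in
theorem block_hashing_estimates_l1_sensitivity
    {n d m : ℕ} (A : Matrix (Fin n) (Fin d) ℝ)
    (hA : LinearIndependent ℝ Aᵀ)
    (α : ℕ) (hα2 : 2 ≤ α) (hαn : α ≤ n)
    (M : Matrix (Fin m) (Fin d) ℝ)
    (hM : ∀ x : Fin d → ℝ,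
      (1 / 2) * ∑ j, |A.mulVec x j| ≤ ∑ j, |M.mulVec x j| ∧
        ∑ j, |M.mulVec x j| ≤ (3 / 2) * ∑ j, |A.mulVec x j|)
    (i : Fin n) :
    5 * (Finset.univ.filter
      (fun ω : {S : Finset (Fin n) // S.card = α ∧ i ∈ S} ×
          (Fin 100 → Fin n → Bool) =>
        (2 / 3) * sens 1 A (A i) ≤
            (⨆ k : Fin 100, sens 1 M
              (∑ j ∈ ω.1.1, (if ω.2 k j then (1 : ℝ) else -1) • A j)) ∧
          (⨆ k : Fin 100, sens 1 M
              (∑ j ∈ ω.1.1, (if ω.2 k j then (1 : ℝ) else -1) • A j)) ≤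
            2 * sens 1 A (A i) +
              20 * ((α : ℝ) / n) * ∑ j : Fin n, sens 1 A (A j))).card
      ≥ 4 * Fintype.card ({S : Finset (Fin n) // S.card = α ∧ i ∈ S} ×
          (Fin 100 → Fin n → Bool)) := by
  classical
  set 𝔅 := {S : Finset (Fin n) // S.card = α ∧ i ∈ S}
  set E := (Fin 100 → Fin n → Bool)
  set Ω := 𝔅 × E
  set Event : Ω → Prop := fun ω =>
        (2 / 3) * sens 1 A (A i) ≤
            (⨆ k : Fin 100, sens 1 M
              (∑ j ∈ ω.1.1, (if ω.2 k j then (1 : ℝ) else -1) • A j)) ∧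
          (⨆ k : Fin 100, sens 1 M
              (∑ j ∈ ω.1.1, (if ω.2 k j then (1 : ℝ) else -1) • A j)) ≤
            2 * sens 1 A (A i) +
              20 * ((α : ℝ) / n) * ∑ j : Fin n, sens 1 A (A j) with hEvent
  show 5 * (Finset.univ.filter Event).card ≥ 4 * Fintype.card Ω
  by_cases hdeg : ∀ x : Fin d → ℝ, A.mulVec x = 0
  · -- degenerate case: every sensitivity is zero and the event always holds
    have hMdeg : ∀ x : Fin d → ℝ, M.mulVec x = 0 := by
      intro x
      apply eq_zero_of_sum_abs_nonpos
      have h2 := (hM x).2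
      have : ∑ j, |A.mulVec x j| = 0 := by
        simp [hdeg x]
      linarith
    have hall : ∀ ω : Ω, Event ω := by
      intro ω
      rw [hEvent]
      simp only [sens_eq_zero_of_degenerate 1 hdeg, sens_eq_zero_of_degenerate 1 hMdeg,
        ciSup_const]
      norm_num
    rw [Finset.filter_true_of_mem (fun ω _ => hall ω)]
    rw [Finset.card_univ]
    omega
    -- `5 * T ≥ 4 * T`
  · push_neg at hdeg
    obtain ⟨x₀, hx₀⟩ := hdeg
    -- basic setup
    set σ : Fin n → ℝ := fun j => sens 1 A (A j) with hσdef
    set Stot : ℝ := ∑ j : Fin n, σ j with hStotdef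
    have hσ0 : ∀ j, 0 ≤ σ j := fun j => sens_nonneg A (A j)
    have hMA : ∀ x : Fin d → ℝ, M.mulVec x ≠ 0 → A.mulVec x ≠ 0 := by
      intro x hx h
      apply hx
      apply eq_zero_of_sum_abs_nonpos
      have h2 := (hM x).2
      have : ∑ j, |A.mulVec x j| = 0 := by simp [h]
      linarith
    have hAM : ∀ x : Fin d → ℝ, A.mulVec x ≠ 0 → M.mulVec x ≠ 0 := by
      intro x hx h
      have h1 := (hM x).1
      have hpos := sum_abs_pos_of_ne_zero hx
      have : ∑ j, |M.mulVec x j| = 0 := by simp [h]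
      linarith
    have hrow : ∀ (j : Fin n) (x : Fin d → ℝ), A.mulVec x ≠ 0 →
        |A j ⬝ᵥ x| ≤ σ j * ∑ l, |A.mulVec x l| := by
      intro j x hx
      obtain ⟨C, hC0, hC⟩ := func_bound A hA (A j)
      have := le_sens (fun x _ => hC x) hx
      rw [div_le_iff₀ (sum_abs_pos_of_ne_zero hx)] at this
      exact this
    -- the key dot product expansion and upper bound for signed combinations
    have hdot : ∀ (B : Finset (Fin n)) (ε : Fin n → Bool) (x : Fin d → ℝ),
        (∑ j ∈ B, (if ε j then (1:ℝ) else -1) • A j) ⬝ᵥ x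
          = ∑ j ∈ B, (if ε j then (1:ℝ) else -1) * (A j ⬝ᵥ x) := by
      intro B ε x
      simp only [dotProduct, Finset.sum_apply, Pi.smul_apply, smul_eq_mul,
        Finset.sum_mul, Finset.mul_sum]
      rw [Finset.sum_comm]
      exact Finset.sum_congr rfl fun j _ => Finset.sum_congr rfl fun l _ => by ring
    have hkey : ∀ (B : Finset (Fin n)) (ε : Fin n → Bool) (x : Fin d → ℝ),
        M.mulVec x ≠ 0 →
        |(∑ j ∈ B, (if ε j then (1:ℝ) else -1) • A j) ⬝ᵥ x|
          ≤ (2 * ∑ j ∈ B, σ j) * ∑ l, |M.mulVec x l| := by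
      intro B ε x hx
      have hxA := hMA x hx
      rw [hdot]
      calc |∑ j ∈ B, (if ε j then (1:ℝ) else -1) * (A j ⬝ᵥ x)|
          ≤ ∑ j ∈ B, |(if ε j then (1:ℝ) else -1) * (A j ⬝ᵥ x)| :=
            Finset.abs_sum_le_sum_abs _ _
        _ = ∑ j ∈ B, |A j ⬝ᵥ x| := by
            apply Finset.sum_congr rfl
            intro j _
            rw [abs_mul]
            rcases Bool.eq_false_or_eq_true (ε j) with h | h <;> simp [h]
        _ ≤ ∑ j ∈ B, σ j * ∑ l, |A.mulVec x l| :=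
            Finset.sum_le_sum (fun j _ => hrow j x hxA)
        _ = (∑ j ∈ B, σ j) * ∑ l, |A.mulVec x l| := by rw [Finset.sum_mul]
        _ ≤ (∑ j ∈ B, σ j) * (2 * ∑ l, |M.mulVec x l|) := by
            apply mul_le_mul_of_nonneg_left _ (Finset.sum_nonneg fun j _ => hσ0 j)
            have := (hM x).1
            linarith
        _ = (2 * ∑ j ∈ B, σ j) * ∑ l, |M.mulVec x l| := by ring
    have hub : ∀ (B : Finset (Fin n)) (ε : Fin n → Bool),
        sens 1 M (∑ j ∈ B, (if ε j then (1:ℝ) else -1) • A j) ≤ 2 * ∑ j ∈ B, σ j := by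
      intro B ε
      exact sens_le (mul_nonneg (by norm_num)
        (Finset.sum_nonneg fun j _ => hσ0 j)) (hkey B ε)
    -- the maximizer for row i
    obtain ⟨y, hAy, hσi⟩ := sens_attained hA (A i) hx₀
    have hMy : M.mulVec y ≠ 0 := hAM y hAy
    have hSAy : 0 < ∑ l, |A.mulVec y l| := sum_abs_pos_of_ne_zero hAy
    have hSMy : 0 < ∑ l, |M.mulVec y l| := sum_abs_pos_of_ne_zero hMy
    -- total sensitivity is positive
    have hStot : 0 < Stot := by
      obtain ⟨j₀, hj₀⟩ := Function.ne_iff.mp hx₀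
      have hrow0 : A.mulVec x₀ j₀ = A j₀ ⬝ᵥ x₀ := rfl
      have hpos : 0 < σ j₀ := by
        obtain ⟨C, hC0, hC⟩ := func_bound A hA (A j₀)
        have h1 := le_sens (fun x _ => hC x) hx₀
        have h2 : 0 < |A j₀ ⬝ᵥ x₀| / ∑ l, |A.mulVec x₀ l| := by
          apply div_pos _ (sum_abs_pos_of_ne_zero hx₀)
          rw [← hrow0]
          exact abs_pos.mpr hj₀
        exact lt_of_lt_of_le h2 h1
      exact Finset.sum_pos' (fun j _ => hσ0 j) ⟨j₀, Finset.mem_univ j₀, hpos⟩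
    -- bad events
    set P1 : 𝔅 → Prop := fun b =>
      10 * ((α : ℝ) / n) * Stot < ∑ j ∈ b.1.erase i, σ j with hP1def
    set bad : Finset (Fin n) → (Fin n → Bool) → Prop := fun B ε =>
      |∑ j ∈ B, (if ε j then (1:ℝ) else -1) * (A j ⬝ᵥ y)| < |A i ⬝ᵥ y| with hbaddef
    set P2 : 𝔅 → E → Prop := fun b e => ∀ k : Fin 100, bad b.1 (e k) with hP2def
    -- good outcomes satisfy the event
    have hgood : ∀ ω : Ω, ¬ P1 ω.1 → ¬ P2 ω.1 ω.2 → Event ω := by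
      rintro ⟨b, e⟩ h1 h2
      rw [hP1def, not_lt] at h1
      rw [hP2def] at h2
      obtain ⟨k₀, hk₀⟩ := not_forall.mp h2
      rw [hbaddef, not_lt] at hk₀
      constructor
      · -- lower bound
        have hbdd : BddAbove (Set.range fun k : Fin 100 =>
            sens 1 M (∑ j ∈ b.1, (if e k j then (1:ℝ) else -1) • A j)) :=
          (Set.finite_range _).bddAbove
        refine le_trans ?_ (le_ciSup hbdd k₀)
        have hs : |(∑ j ∈ b.1, (if e k₀ j then (1:ℝ) else -1) • A j) ⬝ᵥ y|
            / (∑ l, |M.mulVec y l|)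
            ≤ sens 1 M (∑ j ∈ b.1, (if e k₀ j then (1:ℝ) else -1) • A j) :=
          le_sens (hkey b.1 (e k₀)) hMy
        refine le_trans ?_ hs
        rw [hσi]
        have heq : (2:ℝ) / 3 * (|A i ⬝ᵥ y| / ∑ l, |A.mulVec y l|)
            = |A i ⬝ᵥ y| / ((3/2) * ∑ l, |A.mulVec y l|) := by
          field_simp
        rw [heq, hdot]
        apply div_le_div₀ (abs_nonneg _) hk₀ hSMy (hM y).2
      · -- upper bound
        apply ciSup_le
        intro k
        refine le_trans (hub b.1 (e k)) ?_
        have hsplit : ∑ j ∈ b.1, σ j = σ i + ∑ j ∈ b.1.erase i, σ j :=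
          (Finset.add_sum_erase b.1 σ b.2.2).symm
        rw [hsplit]
        have : (2:ℝ) * (σ i + ∑ j ∈ b.1.erase i, σ j)
            ≤ 2 * σ i + 2 * (10 * ((α : ℝ) / n) * Stot) := by linarith
        refine le_trans this ?_
        apply le_of_eq
        rw [hσdef, hStotdef]
        ring
    -- counting
    have hcardΩ : Fintype.card Ω = Fintype.card 𝔅 * Fintype.card E := Fintype.card_prod _ _
    have hN1 : Fintype.card 𝔅 = (n-1).choose (α-1) := card_blocks (by omega) i
    -- Markov bound for P1
    have hmarkov : 10 * (Finset.univ.filter P1).card ≤ Fintype.card 𝔅 := by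
      set N1 := (n-1).choose (α-1) with hN1def
      set N2 := (n-2).choose (α-2) with hN2def
      -- double counting
      have hswap : ∑ b : 𝔅, ∑ j ∈ b.1.erase i, σ j
          = ∑ j ∈ Finset.univ.erase i, σ j * (N2 : ℝ) := by
        have h1 : ∀ b : 𝔅, ∑ j ∈ b.1.erase i, σ j
            = ∑ j ∈ Finset.univ.erase i, if j ∈ b.1 then σ j else 0 := by
          intro b
          rw [← Finset.sum_filter]
          congr 1
          ext j
          simp only [Finset.mem_erase, Finset.mem_filter, Finset.mem_univ, true_and]
          tauto
        simp_rw [h1]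
        rw [Finset.sum_comm]
        apply Finset.sum_congr rfl
        intro j hj
        rw [Finset.sum_ite, Finset.sum_const, Finset.sum_const_zero, add_zero,
          nsmul_eq_mul]
        have hji : j ≠ i := (Finset.mem_erase.mp hj).1
        rw [card_blocks_mem hα2 i j hji, ← hN2def]
        ring
      -- Markov chain of inequalities (over ℝ)
      have step1 : ((Finset.univ.filter P1).card : ℝ) * (10 * ((α:ℝ)/n) * Stot)
          ≤ ∑ b ∈ Finset.univ.filter P1, ∑ j ∈ b.1.erase i, σ j := by
        have := Finset.card_nsmul_le_sum (Finset.univ.filter P1)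
          (fun b => ∑ j ∈ b.1.erase i, σ j) (10 * ((α:ℝ)/n) * Stot)
          (fun b hb => le_of_lt (Finset.mem_filter.mp hb).2)
        simpa [nsmul_eq_mul] using this
      have step2 : ∑ b ∈ Finset.univ.filter P1, ∑ j ∈ b.1.erase i, σ j
          ≤ ∑ b : 𝔅, ∑ j ∈ b.1.erase i, σ j :=
        Finset.sum_le_sum_of_subset_of_nonneg (Finset.filter_subset _ _)
          (fun b _ _ => Finset.sum_nonneg fun j _ => hσ0 j)
      have step3 : ∑ j ∈ Finset.univ.erase i, σ j * (N2:ℝ) ≤ Stot * N2 := by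
        rw [← Finset.sum_mul]
        apply mul_le_mul_of_nonneg_right _ (Nat.cast_nonneg _)
        rw [hStotdef]
        exact Finset.sum_le_sum_of_subset_of_nonneg (Finset.erase_subset _ _)
          (fun j _ _ => hσ0 j)
      -- choose identity in ℕ
      have hnat : n * N2 ≤ α * N1 := by
        have hs := Nat.add_one_mul_choose_eq (n-2) (α-2)
        have e1 : (n - 2) + 1 = n - 1 := by omega
        have e2 : (α - 2) + 1 = α - 1 := by omega
        have h1 : (n-1) * N2 = N1 * (α-1) := by
          rw [hN1def, hN2def, ← e1, ← e2]
          simpa [Nat.succ_eq_add_one] using hs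
        have hαn' : n * (α-1) ≤ α * (n-1) := by
          zify [show (1:ℕ) ≤ α by omega, show (1:ℕ) ≤ n by omega]
          nlinarith [hαn, hα2]
        have hfinal : n * N2 * (n-1) ≤ α * N1 * (n-1) := by
          calc n * N2 * (n-1) = n * ((n-1) * N2) := by ring
            _ = n * (N1 * (α-1)) := by rw [h1]
            _ = (n * (α-1)) * N1 := by ring
            _ ≤ (α * (n-1)) * N1 := Nat.mul_le_mul_right _ hαn'
            _ = α * N1 * (n-1) := by ring
        exact Nat.le_of_mul_le_mul_right hfinal (by omega)
      have hnpos : (0:ℝ) < n := by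
        have : (2:ℕ) ≤ n := le_trans hα2 hαn
        exact_mod_cast lt_of_lt_of_le (by norm_num : (0:ℕ) < 2) this
      have hαpos : (0:ℝ) < α := by
        exact_mod_cast lt_of_lt_of_le (by norm_num : (0:ℕ) < 2) hα2
      have hN2N1 : (N2 : ℝ) ≤ ((α:ℝ)/n) * N1 := by
        rw [div_mul_eq_mul_div, le_div_iff₀ hnpos]
        calc (N2:ℝ) * n = ((n * N2 : ℕ) : ℝ) := by push_cast; ring
          _ ≤ ((α * N1 : ℕ) : ℝ) := by exact_mod_cast hnat
          _ = (α:ℝ) * N1 := by push_cast; ring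
      have hchain : ((Finset.univ.filter P1).card : ℝ) * (10 * ((α:ℝ)/n) * Stot)
          ≤ Stot * (((α:ℝ)/n) * N1) := by
        calc ((Finset.univ.filter P1).card : ℝ) * (10 * ((α:ℝ)/n) * Stot)
            ≤ ∑ b : 𝔅, ∑ j ∈ b.1.erase i, σ j := le_trans step1 step2
          _ = ∑ j ∈ Finset.univ.erase i, σ j * (N2:ℝ) := hswap
          _ ≤ Stot * N2 := step3
          _ ≤ Stot * (((α:ℝ)/n) * N1) := by
              apply mul_le_mul_of_nonneg_left hN2N1 (le_of_lt hStot)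
      have hupos : (0:ℝ) < ((α:ℝ)/n) * Stot := mul_pos (div_pos hαpos hnpos) hStot
      have hreal : (10:ℝ) * (Finset.univ.filter P1).card ≤ N1 := by
        have h' : (((α:ℝ)/n) * Stot) * (10 * ((Finset.univ.filter P1).card : ℝ))
            ≤ (((α:ℝ)/n) * Stot) * N1 := by
          calc (((α:ℝ)/n) * Stot) * (10 * ((Finset.univ.filter P1).card : ℝ))
              = ((Finset.univ.filter P1).card : ℝ) * (10 * ((α:ℝ)/n) * Stot) := by ring
            _ ≤ Stot * (((α:ℝ)/n) * N1) := hchain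
            _ = (((α:ℝ)/n) * Stot) * N1 := by ring
        exact le_of_mul_le_mul_left h' hupos
      rw [hN1]
      exact_mod_cast hreal
    -- sign bound for P2 (per block)
    have hsign : ∀ b : 𝔅,
        16 * (Finset.univ.filter (fun e : E => P2 b e)).card ≤ Fintype.card E := by
      intro b
      have hflip := signflip_count b.1 i b.2.2 (fun j => A j ⬝ᵥ y)
      have hpi : (Finset.univ.filter (fun e : E => P2 b e)).card
          = (Finset.univ.filter (fun ε : Fin n → Bool => bad b.1 ε)).card ^ 100 :=
        pi_count (bad b.1)
      have hE : Fintype.card E = (2^n)^100 := by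
        show Fintype.card (Fin 100 → Fin n → Bool) = _
        simp [Fintype.card_fun]
      rw [hpi, hE]
      have hbadflip : 2 * (Finset.univ.filter (fun ε : Fin n → Bool => bad b.1 ε)).card
          ≤ 2^n := hflip
      calc 16 * (Finset.univ.filter (fun ε : Fin n → Bool => bad b.1 ε)).card ^ 100
          ≤ 2^100 * (Finset.univ.filter (fun ε : Fin n → Bool => bad b.1 ε)).card ^ 100 :=
            Nat.mul_le_mul_right _ (by norm_num)
        _ = (2 * (Finset.univ.filter (fun ε : Fin n → Bool => bad b.1 ε)).card)^100 := by
            rw [mul_pow]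
        _ ≤ (2^n)^100 := Nat.pow_le_pow_left hbadflip 100
    -- assemble
    set b1F := Finset.univ.filter (fun ω : Ω => P1 ω.1) with hb1F
    set b2F := Finset.univ.filter (fun ω : Ω => P2 ω.1 ω.2) with hb2F
    have hb1 : 10 * b1F.card ≤ Fintype.card Ω := by
      have hprod : b1F = (Finset.univ.filter P1) ×ˢ (Finset.univ : Finset E) := by
        ext ω
        rw [hb1F, Finset.mem_filter, Finset.mem_product, Finset.mem_filter]
        simp only [Finset.mem_univ, true_and, and_true]
      rw [hprod, Finset.card_product, hcardΩ]
      calc 10 * ((Finset.univ.filter P1).card * (Finset.univ : Finset E).card)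
          = (10 * (Finset.univ.filter P1).card) * Fintype.card E := by
            rw [Finset.card_univ]; ring
        _ ≤ Fintype.card 𝔅 * Fintype.card E := Nat.mul_le_mul_right _ hmarkov
    have hb2 : 16 * b2F.card ≤ Fintype.card Ω := by
      have hfib : b2F.card = ∑ b : 𝔅, (b2F.filter (fun ω => ω.1 = b)).card :=
        Finset.card_eq_sum_card_fiberwise (fun ω _ => Finset.mem_univ ω.1)
      have hper : ∀ b : 𝔅, (b2F.filter (fun ω => ω.1 = b)).card
          ≤ (Finset.univ.filter (fun e : E => P2 b e)).card := by
        intro b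
        apply Finset.card_le_card_of_injOn (fun ω => ω.2)
        · intro ω hω
          rw [Finset.mem_coe, Finset.mem_filter] at hω
          rw [Finset.mem_coe, Finset.mem_filter]
          obtain ⟨hω1, hω2⟩ := hω
          rw [hb2F, Finset.mem_filter] at hω1
          exact ⟨Finset.mem_univ _, hω2 ▸ hω1.2⟩
        · intro ω hω ω' hω' heq
          simp only [Finset.coe_filter, Set.mem_setOf_eq] at hω hω'
          exact Prod.ext (hω.2.trans hω'.2.symm) heq
      calc 16 * b2F.card = ∑ b : 𝔅, 16 * (b2F.filter (fun ω => ω.1 = b)).card := by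
            rw [hfib, Finset.mul_sum]
        _ ≤ ∑ b : 𝔅, Fintype.card E := Finset.sum_le_sum (fun b _ =>
            le_trans (Nat.mul_le_mul_left _ (hper b)) (hsign b))
        _ = Fintype.card 𝔅 * Fintype.card E := by
            rw [Finset.sum_const, Finset.card_univ, smul_eq_mul]
        _ = Fintype.card Ω := hcardΩ.symm
    have hOr : (Finset.univ.filter (fun ω : Ω => P1 ω.1 ∨ P2 ω.1 ω.2)).card
        ≤ b1F.card + b2F.card := by
      rw [Finset.filter_or]
      exact Finset.card_union_le _ _
    have hsplit : (Finset.univ.filter (fun ω : Ω => P1 ω.1 ∨ P2 ω.1 ω.2)).card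
        + (Finset.univ.filter (fun ω : Ω => ¬(P1 ω.1 ∨ P2 ω.1 ω.2))).card
        = Fintype.card Ω := by
      rw [Finset.card_filter_add_card_filter_not, Finset.card_univ]
    have hsub : (Finset.univ.filter (fun ω : Ω => ¬(P1 ω.1 ∨ P2 ω.1 ω.2))).card
        ≤ (Finset.univ.filter Event).card := by
      apply Finset.card_le_card
      intro ωx hωx
      rw [Finset.mem_filter] at hωx ⊢
      exact ⟨hωx.1, hgood ωx (fun h => hωx.2 (Or.inl h)) (fun h => hωx.2 (Or.inr h))⟩
    omega
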